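/- Let f : ℝ^d → ℝ be differentiable with L-Lipschitz gradient (L ≥ 0), let r : ℝ^d → ℝ ∪ {+∞} be proper, and let u : ℝ^d × ℝ^d → ℝ ∪ {+∞} be a surrogate of r such that u(·, z) is convex. Set F = f + r, let μ > 0, fix z ∈ ℝ^d with r(z) < +∞ and g ∈ ℝ^d, and suppose x⁺ is a global minimizer over ℝ^d of the function x ↦ (μ/2)‖x − z‖² + ⟨g, x⟩ + u(x, z). Then F(x⁺) + ((2μ − L)/2)‖x⁺ − z‖² ≤ F(z) + ⟨∇f(z) − g, x⁺ − z⟩. -/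

import Mathlib

open scoped RealInnerProductSpace


lemma descent_aux (d : ℕ) (L : ℝ) (hL : 0 ≤ L)
    (f : EuclideanSpace ℝ (Fin d) → ℝ) (hf : Differentiable ℝ f)
    (hlip : ∀ x y : EuclideanSpace ℝ (Fin d),
      ‖gradient f x - gradient f y‖ ≤ L * ‖x - y‖)
    (x y : EuclideanSpace ℝ (Fin d)) :
    f y ≤ f x + ⟪gradient f x, y - x⟫ + L / 2 * ‖y - x‖ ^ 2 := by
  set v := y - x with hv
  set ψ : ℝ → ℝ := fun t => f (x + t • v) - t * ⟪gradient f x, v⟫ - L / 2 * t ^ 2 * ‖v‖ ^ 2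
    with hψ
  have hφd : ∀ t : ℝ, HasDerivAt (fun t : ℝ => f (x + t • v))
      (⟪gradient f (x + t • v), v⟫) t := by
    intro t
    have hline : HasDerivAt (fun t : ℝ => x + t • v) v t := by
      simpa using ((hasDerivAt_id t).smul_const v).const_add x
    have := ((hf (x + t • v)).hasGradientAt.hasFDerivAt).comp_hasDerivAt t hline
    simp only [InnerProductSpace.toDual_apply_apply] at this
    exact this
  have hψd : ∀ t : ℝ, HasDerivAt ψ
      (⟪gradient f (x + t • v), v⟫ - ⟪gradient f x, v⟫ - L * t * ‖v‖ ^ 2) t := by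
    intro t
    have h1 : HasDerivAt (fun t : ℝ => t * ⟪gradient f x, v⟫) ⟪gradient f x, v⟫ t := by
      simpa using (hasDerivAt_id t).mul_const _
    have h2 : HasDerivAt (fun t : ℝ => L / 2 * t ^ 2 * ‖v‖ ^ 2) (L * t * ‖v‖ ^ 2) t := by
      have := ((hasDerivAt_pow 2 t).const_mul (L / 2)).mul_const (‖v‖ ^ 2)
      refine this.congr_deriv ?_
      ring
    exact ((hφd t).sub h1).sub h2
  have hmono : AntitoneOn ψ (Set.Icc 0 1) := by
    apply antitoneOn_of_deriv_nonpos (convex_Icc 0 1)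
    · exact fun t _ => ((hψd t).differentiableAt).continuousAt.continuousWithinAt
    · intro t ht
      exact ((hψd t).differentiableAt).differentiableWithinAt
    · intro t ht
      rw [interior_Icc] at ht
      rw [(hψd t).deriv]
      have h1 : ⟪gradient f (x + t • v), v⟫ - ⟪gradient f x, v⟫
          = ⟪gradient f (x + t • v) - gradient f x, v⟫ := by
        rw [inner_sub_left]
      have h2 : ⟪gradient f (x + t • v) - gradient f x, v⟫ ≤ L * t * ‖v‖ ^ 2 := by
        calc ⟪gradient f (x + t • v) - gradient f x, v⟫
            ≤ ‖gradient f (x + t • v) - gradient f x‖ * ‖v‖ := real_inner_le_norm _ _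
          _ ≤ (L * ‖(x + t • v) - x‖) * ‖v‖ := by
              gcongr; exact hlip _ _
          _ = L * t * ‖v‖ ^ 2 := by
              rw [add_sub_cancel_left, norm_smul, Real.norm_eq_abs, abs_of_pos ht.1]; ring
      linarith [h1 ▸ h2]
  have h01 := hmono (Set.left_mem_Icc.2 zero_le_one) (Set.right_mem_Icc.2 zero_le_one) zero_le_one
  have hxy : x + (1:ℝ) • v = y := by rw [one_smul, hv]; abel
  simp only [hψ, hxy, zero_smul, add_zero, zero_mul, one_mul, one_pow, mul_zero, sub_zero] at h01
  linarith

/-- One-step descent inequality for the SVRMM update.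
`f : ℝ^d → ℝ` is differentiable with `L`-Lipschitz gradient (`L ≥ 0`);
`r : ℝ^d → ℝ ∪ {+∞}` is proper (here: `EReal`-valued, never `⊥`, finite somewhere);
`u` is a surrogate of `r` (`u(y,y) = r(y)` and `u(x,y) ≥ r(x)`), never `⊥`, with `u(·, z)` convex;
`F = f + r`, `μ > 0`, `r(z) < +∞`, and `x⁺` is a global minimizer of
`x ↦ (μ/2)‖x − z‖² + ⟨g, x⟩ + u(x, z)`. Then
`F(x⁺) + ((2μ − L)/2)‖x⁺ − z‖² ≤ F(z) + ⟨∇f(z) − g, x⁺ − z⟩`. -/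
theorem stmt_7 (d : ℕ) (L μ : ℝ) (hL : 0 ≤ L) (hμ : 0 < μ)
    (f : EuclideanSpace ℝ (Fin d) → ℝ) (hf : Differentiable ℝ f)
    (hlip : ∀ x y : EuclideanSpace ℝ (Fin d),
      ‖gradient f x - gradient f y‖ ≤ L * ‖x - y‖)
    (r : EuclideanSpace ℝ (Fin d) → EReal)
    (hrbot : ∀ x, r x ≠ ⊥) (hrproper : ∃ x, r x ≠ ⊤)
    (u : EuclideanSpace ℝ (Fin d) → EuclideanSpace ℝ (Fin d) → EReal)
    (hubot : ∀ x y, u x y ≠ ⊥)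
    (hu1 : ∀ y, u y y = r y)
    (hu2 : ∀ x y, r x ≤ u x y)
    (z : EuclideanSpace ℝ (Fin d)) (hz : r z < ⊤)
    (huconv : ∀ a b : EuclideanSpace ℝ (Fin d), ∀ s t : ℝ, 0 ≤ s → 0 ≤ t → s + t = 1 →
      u (s • a + t • b) z ≤ (s : EReal) * u a z + (t : EReal) * u b z)
    (g xp : EuclideanSpace ℝ (Fin d))
    (hxp : ∀ x : EuclideanSpace ℝ (Fin d),
      ((μ / 2 * ‖xp - z‖ ^ 2 + ⟪g, xp⟫ : ℝ) : EReal) + u xp z ≤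
        ((μ / 2 * ‖x - z‖ ^ 2 + ⟪g, x⟫ : ℝ) : EReal) + u x z) :
    ((f xp : ℝ) : EReal) + r xp + (((2 * μ - L) / 2 * ‖xp - z‖ ^ 2 : ℝ) : EReal) ≤
      ((f z : ℝ) : EReal) + r z + ((⟪gradient f z - g, xp - z⟫ : ℝ) : EReal) := by
  set N : ℝ := ‖xp - z‖ ^ 2 with hN
  have hN0 : 0 ≤ N := sq_nonneg _
  set Rz : ℝ := (r z).toReal with hRzdef
  have hrz : r z = (Rz : EReal) := (EReal.coe_toReal hz.ne (hrbot z)).symm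
  -- u xp z is finite
  have h0 := hxp z
  rw [hu1 z, hrz] at h0
  simp only [sub_self, norm_zero] at h0
  have hutop : u xp z ≠ ⊤ := by
    intro h
    rw [h] at h0
    simp [EReal.add_top_of_ne_bot (EReal.coe_ne_bot _)] at h0
    exact (EReal.coe_ne_top _ (top_le_iff.1 h0)).elim
  set U : ℝ := (u xp z).toReal with hUdef
  have hu : u xp z = (U : EReal) := (EReal.coe_toReal hutop (hubot xp z)).symm
  -- r xp is finite
  have hrxptop : r xp ≠ ⊤ := by
    intro h
    have := hu2 xp z
    rw [h, hu, top_le_iff] at this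
    exact EReal.coe_ne_top _ this
  set Rxp : ℝ := (r xp).toReal with hRxpdef
  have hrxp : r xp = (Rxp : EReal) := (EReal.coe_toReal hrxptop (hrbot xp)).symm
  have hRxpU : Rxp ≤ U := by
    have := hu2 xp z
    rw [hrxp, hu] at this
    exact_mod_cast this
  -- strong minimizer inequality for t ∈ (0,1]
  have key1 : ∀ t ∈ Set.Ioc (0:ℝ) 1, μ / 2 * (2 - t) * N + ⟪g, xp - z⟫ + U ≤ Rz := by
    rintro t ⟨ht0, ht1⟩
    set xt : EuclideanSpace ℝ (Fin d) := t • z + (1 - t) • xp with hxt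
    have hxtz : xt - z = (1 - t) • (xp - z) := by rw [hxt]; module
    have hnorm : ‖xt - z‖ ^ 2 = (1 - t) ^ 2 * N := by
      rw [hxtz, norm_smul, Real.norm_eq_abs, abs_of_nonneg (by linarith)]
      ring
    have hinner : ⟪g, xt⟫ = t * ⟪g, z⟫ + (1 - t) * ⟪g, xp⟫ := by
      rw [hxt, inner_add_right, real_inner_smul_right, real_inner_smul_right]
    have hconv := huconv z xp t (1 - t) (le_of_lt ht0) (by linarith) (by ring)
    rw [hu1 z, hrz, hu] at hconv
    have h2 := hxp xt
    rw [hu] at h2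
    have h3 : ((μ / 2 * ‖xp - z‖ ^ 2 + ⟪g, xp⟫ : ℝ) : EReal) + (U : EReal) ≤
        ((μ / 2 * ‖xt - z‖ ^ 2 + ⟪g, xt⟫ : ℝ) : EReal) +
          ((t * Rz + (1 - t) * U : ℝ) : EReal) := by
      refine h2.trans (add_le_add_right (hconv.trans_eq ?_) _)
      rw [← EReal.coe_mul, ← EReal.coe_mul, ← EReal.coe_add]
    rw [← EReal.coe_add, ← EReal.coe_add, EReal.coe_le_coe_iff] at h3
    rw [hnorm, hinner, ← hN] at h3
    have hgsub : ⟪g, xp - z⟫ = ⟪g, xp⟫ - ⟪g, z⟫ := inner_sub_right g xp z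
    rw [hgsub]
    nlinarith [h3, ht0, mul_pos ht0 ht0]
  -- pass to the limit t → 0⁺
  have key2 : μ * N + ⟪g, xp - z⟫ + U ≤ Rz := by
    have htend : Filter.Tendsto (fun t : ℝ => μ / 2 * (2 - t) * N + ⟪g, xp - z⟫ + U)
        (nhdsWithin 0 (Set.Ioi (0:ℝ)))
        (nhds (μ / 2 * (2 - 0) * N + ⟪g, xp - z⟫ + U)) := by
      apply Filter.Tendsto.mono_left _ nhdsWithin_le_nhds
      exact (Continuous.tendsto (by fun_prop) 0)
    have hmem : Set.Ioc (0:ℝ) 1 ∈ nhdsWithin 0 (Set.Ioi (0:ℝ)) :=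
      Ioc_mem_nhdsGT_of_mem (Set.mem_Ico.2 ⟨le_refl 0, one_pos⟩)
    have hev : ∀ᶠ t in nhdsWithin 0 (Set.Ioi (0:ℝ)),
        μ / 2 * (2 - t) * N + ⟪g, xp - z⟫ + U ≤ Rz :=
      Filter.eventually_of_mem hmem key1
    have := le_of_tendsto htend hev
    linarith [this]
  -- descent lemma
  have hdesc : f xp ≤ f z + ⟪gradient f z, xp - z⟫ + L / 2 * N :=
    descent_aux d L hL f hf hlip z xp
  -- combine
  rw [hrxp, hrz, ← EReal.coe_add, ← EReal.coe_add, ← EReal.coe_add, ← EReal.coe_add,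
    EReal.coe_le_coe_iff]
  have hgsub2 : ⟪gradient f z - g, xp - z⟫ = ⟪gradient f z, xp - z⟫ - ⟪g, xp - z⟫ :=
    inner_sub_left _ _ _
  rw [hgsub2]
  linarith
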